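/- arXiv:1609.06252 — 4 statements merged into one kernel-verified Lean document; each statement's English description precedes it below -/
import Mathlib

section
/- Let α < 0 and X ∈ S with pairwise distinct columns. For each column index k, ⟨X_{:,k}, -∂E_α/∂X_{:,k}(X)⟩ > 0, where ∂E_α/∂X_{:,k}(X) = Σ_{j≠k} α (X_{:,k} - X_{:,j}) ‖X_{:,k} - X_{:,j}‖₂^{α-1}. -/
open scoped RealInnerProductSpace
open Finset

/-- The `j`-th column of a matrix, as a vector in Euclidean space. -/
noncomputable def col {n N : ℕ} (X : Matrix (Fin n) (Fin N) ℝ) (j : Fin N) :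
    EuclideanSpace ℝ (Fin n) := WithLp.toLp 2 (fun i => X i j)

/-- The set `S` of matrices all of whose columns are unit vectors. -/
def sphereSet (n N : ℕ) : Set (Matrix (Fin n) (Fin N) ℝ) :=
  {X | ∀ j, ‖col X j‖ = 1}

/-- The Frobenius norm `‖X‖_F = √(Tr (X Xᵀ))`. -/
noncomputable def frob {n N : ℕ} (X : Matrix (Fin n) (Fin N) ℝ) : ℝ :=
  Real.sqrt (Matrix.trace (X * Matrix.transpose X))

/-- The generalized energy `E_α(X) = Σ_i Σ_{j<i} ‖X_{:,i} - X_{:,j}‖₂^α`. -/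
noncomputable def energy {n N : ℕ} (α : ℝ) (X : Matrix (Fin n) (Fin N) ℝ) : ℝ :=
  ∑ i : Fin N, ∑ j ∈ Finset.univ.filter (fun j => j < i), ‖col X i - col X j‖ ^ α

/-- The gradient of `E_α` with respect to the `k`-th column. -/
noncomputable def gradCol {n N : ℕ} (α : ℝ) (X : Matrix (Fin n) (Fin N) ℝ) (k : Fin N) :
    EuclideanSpace ℝ (Fin n) :=
  ∑ j ∈ Finset.univ.filter (fun j => j ≠ k),
    (α * ‖col X k - col X j‖ ^ (α - 1)) • (col X k - col X j)

/-- The gradient matrix `∇E_α(X)`, whose `k`-th column is `gradCol α X k`. -/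
noncomputable def gradMat {n N : ℕ} (α : ℝ) (X : Matrix (Fin n) (Fin N) ℝ) :
    Matrix (Fin n) (Fin N) ℝ := fun i k => gradCol α X k i

/-- The columnwise projection onto `conv(S)`. -/
noncomputable def projS {n N : ℕ} (X : Matrix (Fin n) (Fin N) ℝ) :
    Matrix (Fin n) (Fin N) ℝ :=
  fun i j => if 1 < ‖col X j‖ then X i j / ‖col X j‖ else X i j

/-- Pairwise distinct columns. -/
def distinctCols {n N : ℕ} (X : Matrix (Fin n) (Fin N) ℝ) : Prop :=
  ∀ i j : Fin N, i ≠ j → col X i ≠ col X j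

theorem inner_col_neg_gradCol_pos {n N : ℕ} (hN : 2 ≤ N) (α : ℝ) (hα : α < 0)
    (X : Matrix (Fin n) (Fin N) ℝ) (hX : X ∈ sphereSet n N) (hd : distinctCols X) :
    ∀ k : Fin N, 0 < ⟪col X k, -gradCol α X k⟫ := by

  intro k
  rw [inner_neg_right]
  have h : ⟪col X k, gradCol α X k⟫ < 0 := by
    unfold gradCol
    rw [inner_sum]
    apply Finset.sum_neg
    · intro j hj
      have hjk : j ≠ k := (Finset.mem_filter.mp hj).2
      have hne : col X k - col X j ≠ 0 := sub_ne_zero.mpr (hd k j (Ne.symm hjk))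
      have hnorm : (0:ℝ) < ‖col X k - col X j‖ := norm_pos_iff.mpr hne
      have hc : α * ‖col X k - col X j‖ ^ (α - 1) < 0 :=
        mul_neg_of_neg_of_pos hα (Real.rpow_pos_of_pos hnorm _)
      rw [real_inner_smul_right]
      have hip : 0 < ⟪col X k, col X k - col X j⟫ := by
        have h1 : ‖col X k‖ = 1 := hX k
        have h2 : ‖col X j‖ = 1 := hX j
        have hsq : ‖col X k - col X j‖ ^ 2 =
            2 - 2 * ⟪col X k, col X j⟫ := by
          rw [norm_sub_sq_real, h1, h2]; ring
        have hpos : 0 < ‖col X k - col X j‖ ^ 2 := by positivity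
        rw [inner_sub_right, real_inner_self_eq_norm_sq, h1]
        nlinarith
      exact mul_neg_of_neg_of_pos hc hip
    · haveI : Nontrivial (Fin N) := Fin.nontrivial_iff_two_le.mpr hN
      obtain ⟨j, hjk⟩ := exists_ne k
      exact ⟨j, Finset.mem_filter.mpr ⟨Finset.mem_univ j, hjk⟩⟩
  linarith
end

section
/- Let α < 0 and X ∈ S with pairwise distinct columns. Then the Frobenius inner product ⟨X, -∇E_α(X)⟩_F > 0, i.e., the steepest descent direction points outward from conv(S). -/
open scoped RealInnerProductSpace
open Finset

theorem frob_inner_neg_grad_pos {n N : ℕ} (hN : 2 ≤ N) (α : ℝ) (hα : α < 0)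
    (X : Matrix (Fin n) (Fin N) ℝ) (hX : X ∈ sphereSet n N) (hd : distinctCols X) :
    0 < Matrix.trace (X * Matrix.transpose (-(gradMat α X))) := by
  classical
  set f : Fin N → Fin N → ℝ := fun k j =>
      (α * ‖col X k - col X j‖ ^ (α - 1)) * ⟪col X k, col X k - col X j⟫ with hf
  have hcol : ∀ k j : Fin N, j ≠ k → (0:ℝ) < ‖col X k - col X j‖ := by
    intro k j h
    rw [norm_pos_iff, sub_ne_zero]
    exact hd k j h.symm
  have key : ∀ k, ⟪col X k, gradCol α X k⟫ =
      ∑ j ∈ Finset.univ.filter (fun j => j ≠ k), f k j := by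
    intro k
    rw [gradCol, inner_sum]
    exact Finset.sum_congr rfl fun j hj => real_inner_smul_right _ _ _
  have htr : Matrix.trace (X * Matrix.transpose (-(gradMat α X))) =
      ∑ k : Fin N, -(⟪col X k, gradCol α X k⟫) := by
    simp only [Matrix.trace, Matrix.diag, Matrix.mul_apply, Matrix.transpose_apply,
      Matrix.neg_apply, gradMat]
    rw [Finset.sum_comm]
    refine Finset.sum_congr rfl fun k _ => ?_
    rw [PiLp.inner_apply, ← Finset.sum_neg_distrib]
    simp [RCLike.inner_apply, col, mul_neg, mul_comm]
  have hpair : ∀ k j : Fin N, f k j + f j k =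
      (α * ‖col X k - col X j‖ ^ (α - 1)) * ‖col X k - col X j‖ ^ 2 := by
    intro k j
    have hsymm : ‖col X j - col X k‖ = ‖col X k - col X j‖ := norm_sub_rev _ _
    have hneg : (col X j - col X k) = -(col X k - col X j) := by abel
    have h2 : ⟪col X k, col X k - col X j⟫ - ⟪col X j, col X k - col X j⟫
        = ‖col X k - col X j‖ ^ 2 := by
      rw [← inner_sub_left, real_inner_self_eq_norm_sq]
    simp only [hf]
    rw [hsymm, hneg, inner_neg_right]
    linear_combination (α * ‖col X k - col X j‖ ^ (α - 1)) * h2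
  have hterm : ∀ k j : Fin N, j < k → 0 < -(f k j + f j k) := by
    intro k j hjk
    rw [hpair]
    have h1 := hcol k j (ne_of_lt hjk)
    have h2 : (0:ℝ) < ‖col X k - col X j‖ ^ (α - 1) := Real.rpow_pos_of_pos h1 _
    have h3 : (0:ℝ) < ‖col X k - col X j‖ ^ (α - 1) * ‖col X k - col X j‖ ^ 2 :=
      mul_pos h2 (pow_pos h1 2)
    have := mul_neg_of_neg_of_pos hα h3
    rw [mul_assoc]
    linarith
  have hsplit : ∑ k : Fin N, -(⟪col X k, gradCol α X k⟫) =
      ∑ k : Fin N, ∑ j : Fin N, (if j < k then -(f k j + f j k) else 0) := by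
    have e1 : ∑ k : Fin N, ⟪col X k, gradCol α X k⟫ =
        (∑ k : Fin N, ∑ j : Fin N, (if j < k then f k j else 0)) +
        (∑ k : Fin N, ∑ j : Fin N, (if k < j then f k j else 0)) := by
      rw [← Finset.sum_add_distrib]
      refine Finset.sum_congr rfl fun k _ => ?_
      rw [key k, Finset.sum_filter, ← Finset.sum_add_distrib]
      refine Finset.sum_congr rfl fun j _ => ?_
      rcases lt_trichotomy j k with h | h | h
      · simp [h, ne_of_lt h, not_lt_of_gt h]
      · simp [h]
      · simp [h, (ne_of_lt h).symm, not_lt_of_gt h]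
    have e2 : ∑ k : Fin N, ∑ j : Fin N, (if k < j then f k j else 0) =
        ∑ k : Fin N, ∑ j : Fin N, (if j < k then f j k else 0) :=
      Finset.sum_comm
    rw [Finset.sum_neg_distrib, e1, e2, ← Finset.sum_add_distrib,
      ← Finset.sum_neg_distrib]
    refine Finset.sum_congr rfl fun k _ => ?_
    rw [← Finset.sum_add_distrib, ← Finset.sum_neg_distrib]
    refine Finset.sum_congr rfl fun j _ => ?_
    by_cases h : j < k <;> simp [h]
  rw [htr, hsplit]
  have hk1 : (1 : ℕ) < N := by omega
  refine Finset.sum_pos' (fun k _ => Finset.sum_nonneg fun j _ => ?_)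
    ⟨⟨1, hk1⟩, Finset.mem_univ _, ?_⟩
  · by_cases h : j < k
    · simp only [if_pos h]; exact le_of_lt (hterm k j h)
    · simp [h]
  · refine Finset.sum_pos' (fun j _ => ?_) ⟨⟨0, by omega⟩, Finset.mem_univ _, ?_⟩
    · by_cases h : j < (⟨1, hk1⟩ : Fin N)
      · simp only [if_pos h]; exact le_of_lt (hterm _ j h)
      · simp [h]
    · have h01 : (⟨0, by omega⟩ : Fin N) < ⟨1, hk1⟩ := by simp [Fin.lt_def]
      simp only [if_pos h01]
      exact hterm _ _ h01
end

section
/- For α < 0, N ≥ 2, any X ∈ S with pairwise distinct columns, and any step size γ > 0, the gradient projection iterate [X - γ ∇E_α(X)]⁺ lies in S (i.e., all its columns are unit vectors). -/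
open scoped RealInnerProductSpace
open Finset

theorem projS_grad_step_mem_sphereSet {n N : ℕ} (hN : 2 ≤ N) (α : ℝ) (hα : α < 0)
    (X : Matrix (Fin n) (Fin N) ℝ) (hX : X ∈ sphereSet n N) (hd : distinctCols X)
    (γ : ℝ) (hγ : 0 < γ) :
    projS (X - γ • gradMat α X) ∈ sphereSet n N := by
  intro k
  haveI : Nontrivial (Fin N) := Fin.nontrivial_iff_two_le.mpr hN
  set Y := X - γ • gradMat α X with hY
  have hcol : ∀ j : Fin N, col Y j = col X j - γ • gradCol α X j := by
    intro j
    ext i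
    simp [col, hY, gradMat, Matrix.sub_apply, Matrix.smul_apply]
  -- inner product of x_k with each difference is positive
  have hpos : ∀ j : Fin N, j ≠ k → 0 < ⟪col X k, col X k - col X j⟫ := by
    intro j hj
    have hne : col X k - col X j ≠ 0 := sub_ne_zero.mpr (hd k j (Ne.symm hj))
    have hnorm : 0 < ‖col X k - col X j‖ := norm_pos_iff.mpr hne
    have hsq : ‖col X k - col X j‖ ^ 2
        = ‖col X k‖ ^ 2 - 2 * ⟪col X k, col X j⟫ + ‖col X j‖ ^ 2 := by
      rw [norm_sub_sq_real]
    have h1 : ‖col X k‖ = 1 := hX k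
    have h2 : ‖col X j‖ = 1 := hX j
    have : ⟪col X k, col X k - col X j⟫ = ‖col X k - col X j‖ ^ 2 / 2 := by
      rw [inner_sub_right, real_inner_self_eq_norm_sq, hsq, h1, h2]
      ring
    rw [this]
    positivity
  -- the inner product of x_k with the gradient column is negative
  have hgrad : ⟪col X k, gradCol α X k⟫ < 0 := by
    rw [gradCol, inner_sum]
    apply Finset.sum_neg
    · intro j hj
      rw [Finset.mem_filter] at hj
      rw [real_inner_smul_right]
      have hne : col X k - col X j ≠ 0 := sub_ne_zero.mpr (hd k j (Ne.symm hj.2))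
      have hnorm : 0 < ‖col X k - col X j‖ := norm_pos_iff.mpr hne
      have h1 : 0 < ‖col X k - col X j‖ ^ (α - 1) := Real.rpow_pos_of_pos hnorm _
      have h2 := hpos j hj.2
      have : α * ‖col X k - col X j‖ ^ (α - 1) < 0 :=
        mul_neg_of_neg_of_pos hα h1
      exact mul_neg_of_neg_of_pos this h2
    · obtain ⟨j, hj⟩ := exists_ne k
      exact ⟨j, Finset.mem_filter.mpr ⟨Finset.mem_univ j, hj⟩⟩
  -- hence the inner product of x_k with the new column exceeds 1
  have hinner : 1 < ⟪col X k, col Y k⟫ := by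
    rw [hcol k, inner_sub_right, real_inner_smul_right,
      real_inner_self_eq_norm_sq, hX k]
    nlinarith
  have hnormY : 1 < ‖col Y k‖ := by
    have h := real_inner_le_norm (col X k) (col Y k)
    rw [hX k, one_mul] at h
    linarith
  -- compute the projected column
  have hcolP : col (projS Y) k = ‖col Y k‖⁻¹ • col Y k := by
    ext i
    show (if 1 < ‖col Y k‖ then Y i k / ‖col Y k‖ else Y i k) = ‖col Y k‖⁻¹ * Y i k
    rw [if_pos hnormY, div_eq_inv_mul]
  show ‖col (projS Y) k‖ = 1
  rw [hcolP, norm_smul, norm_inv, Real.norm_eq_abs,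
    abs_of_pos (by linarith : (0:ℝ) < ‖col Y k‖)]
  field_simp
end

section
/- Let α < 0 and X ∈ S with pairwise distinct columns. Then for every γ > 0 and every column index k, ‖X_{:,k} - γ ∂E_α/∂X_{:,k}(X)‖₂ > 1. -/
open scoped RealInnerProductSpace
open Finset

theorem norm_col_grad_step_gt_one {n N : ℕ} (hN : 2 ≤ N) (α : ℝ) (hα : α < 0)
    (X : Matrix (Fin n) (Fin N) ℝ) (hX : X ∈ sphereSet n N) (hd : distinctCols X)
    (γ : ℝ) (hγ : 0 < γ) :
    ∀ k : Fin N, 1 < ‖col X k - γ • gradCol α X k‖ := by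
  intro k
  have hk : ‖col X k‖ = 1 := hX k
  have hgrad : ⟪col X k, gradCol α X k⟫ < 0 := by
    rw [gradCol, inner_sum]
    apply Finset.sum_neg
    · intro j hj
      simp only [Finset.mem_filter] at hj
      rw [real_inner_smul_right, inner_sub_right, real_inner_self_eq_norm_sq, hk]
      have hne : col X k ≠ col X j := hd k j (Ne.symm hj.2)
      have hnorm : 0 < ‖col X k - col X j‖ := by
        rw [norm_pos_iff]; exact sub_ne_zero.mpr hne
      have hpow : 0 < ‖col X k - col X j‖ ^ (α - 1) :=
        Real.rpow_pos_of_pos hnorm _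
      have hlt : ⟪col X k, col X j⟫ < 1 :=
        (inner_lt_one_iff_real_of_norm_eq_one hk (hX j)).mpr hne
      have hp := mul_pos hpow (sub_pos.mpr hlt)
      nlinarith
    · have hcard : 1 < (Finset.univ : Finset (Fin N)).card := by
        simp only [Finset.card_univ, Fintype.card_fin]; omega
      obtain ⟨j, _, hjne⟩ := Finset.exists_mem_ne hcard k
      exact ⟨j, by simp [hjne]⟩
  have key : (1:ℝ) < ⟪col X k, col X k - γ • gradCol α X k⟫ := by
    rw [inner_sub_right, real_inner_smul_right, real_inner_self_eq_norm_sq, hk]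
    nlinarith
  calc (1:ℝ) < ⟪col X k, col X k - γ • gradCol α X k⟫ := key
    _ ≤ ‖col X k‖ * ‖col X k - γ • gradCol α X k‖ := real_inner_le_norm _ _
    _ = ‖col X k - γ • gradCol α X k‖ := by rw [hk, one_mul]
end
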